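/- Let H = (X, F) be a hypergraph and G = G(H, a) the graph from the transference construction. If D ⊆ X is a dominating set of G, then D contains some hyperedge F ∈ F. -/

import Mathlib

/-- The vertex covers of the hypergraph `(X, F)`: sets meeting every hyperedge. -/
def vertexCovers {X : Type} (F : Set (Set X)) : Set (Set X) :=
  {A | ∀ e ∈ F, (A ∩ e).Nonempty}

/-- Vertex set of the transference graph `G(H, a)`: the board `X` together with,
for every vertex cover `A`, a set `X_A` of `4a(|X| + |𝒱(H)|)` fresh vertices. -/
def TVert (X : Type) (F : Set (Set X)) (a : ℕ) : Type :=
  X ⊕ ({A : Set X // A ∈ vertexCovers F} × Fin (4 * a * (Nat.card X + (vertexCovers F).ncard)))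

/-- The transference graph `G(H, a)`: `G[X]` is complete, and a fresh vertex of
`X_A` is adjacent exactly to the vertices of the vertex cover `A`. -/
def TGraph (X : Type) (F : Set (Set X)) (a : ℕ) : SimpleGraph (TVert X F a) where
  Adj p q := match p, q with
    | Sum.inl u, Sum.inl v => u ≠ v
    | Sum.inl u, Sum.inr q => u ∈ q.1.1
    | Sum.inr p, Sum.inl v => v ∈ p.1.1
    | Sum.inr _, Sum.inr _ => False
  symm := by
    constructor
    rintro (u | p) (v | q) h
    · exact Ne.symm h
    · exact h
    · exact h
    · exact h.elim
  loopless := by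
    constructor
    rintro (u | p) h
    · exact h rfl
    · exact h

/-- `D` is a dominating set of `G`. -/
def IsDomSet {V : Type} (G : SimpleGraph V) (D : Set V) : Prop :=
  ∀ v, v ∈ D ∨ ∃ u ∈ D, G.Adj u v

/-- If `D ⊆ X` is a dominating set of the transference graph
`G(H, a)`, then `D` contains some hyperedge of `H = (X, F)`. -/
theorem dominating_subset_contains_hyperedge {X : Type} [Finite X] (F : Set (Set X))
    (a : ℕ) (ha : 1 ≤ a) (hne : F.Nonempty) (hedges : ∀ e ∈ F, e.Nonempty) :
    ∀ D : Set X, IsDomSet (TGraph X F a) (Sum.inl '' D) → ∃ e ∈ F, e ⊆ D := by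
  intro D hD
  by_contra hcon
  push_neg at hcon
  -- A := Dᶜ is a vertex cover
  have hA : Dᶜ ∈ vertexCovers F := by
    intro e he
    obtain ⟨x, hx, hxD⟩ := Set.not_subset.mp (hcon e he)
    exact ⟨x, hxD, hx⟩
  -- X is nonempty
  obtain ⟨e, heF⟩ := hne
  obtain ⟨x0, _⟩ := hedges e heF
  have hX : 1 ≤ Nat.card X := Nat.one_le_iff_ne_zero.mpr (Nat.card_ne_zero.mpr ⟨⟨x0⟩, inferInstance⟩)
  have hpos : 0 < 4 * a * (Nat.card X + (vertexCovers F).ncard) := by positivity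
  -- the fresh vertex
  set v : TVert X F a := Sum.inr ⟨⟨Dᶜ, hA⟩, ⟨0, hpos⟩⟩ with hv
  rcases hD v with h | ⟨u, hu, hadj⟩
  · obtain ⟨y, _, hy⟩ := h
    exact absurd hy (by simp [hv])
  · obtain ⟨y, hyD, rfl⟩ := hu
    exact hadj hyD
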